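/- Let k be a field, R = k[x,y], let f ∈ R be a nonzero form of degree d ≥ 1, let g ∈ R be a form of degree e, let n ∈ ℕ, and let I ⊆ R be a homogeneous ideal with I ⊆ f^n·R. Assume there is N such that for all j ≥ N: (i) g·R_{j-e} ⊆ f^n·R_{j-nd}; (ii) g·f·R_{j-e-d} ⊆ I_j; and (iii) multiplication by g induces a bijection R_{j-e}/(f·R_{j-e-d}) → (f^n·R_{j-nd})/I_j. Then there is N' such that I_j = f^{n+1}·R_{j-(n+1)d} for all j ≥ N'. -/

import Mathlib

open MvPolynomial

/-- The space of homogeneous forms of (integer) degree `n` in `k[x,y]`, with the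
convention that it is `0` for negative `n`. -/
noncomputable def homDegZ (k : Type*) [CommSemiring k] (σ : Type*) (n : ℤ) :
    Submodule k (MvPolynomial σ k) :=
  if 0 ≤ n then homogeneousSubmodule σ k n.toNat else ⊥

lemma homDegZ_eq {k : Type*} [CommSemiring k] {σ : Type*} (m : ℤ) (a : ℕ) (h : m = (a : ℤ)) :
    homDegZ k σ m = homogeneousSubmodule σ k a := by
  subst h
  simp [homDegZ]

lemma hc_mul_homog {k : Type*} [CommSemiring k] {σ : Type*} (f w : MvPolynomial σ k) (m i : ℕ)
    (hf : f.IsHomogeneous m) :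
    homogeneousComponent (m + i) (f * w) = f * homogeneousComponent i w := by
  conv_lhs => rw [← sum_homogeneousComponent w]
  rw [Finset.mul_sum, map_sum]
  have key : ∀ t, homogeneousComponent (m + i) (f * homogeneousComponent t w)
      = if i = t then f * homogeneousComponent t w else 0 := by
    intro t
    rw [homogeneousComponent_of_mem (hf.mul (homogeneousComponent_isHomogeneous t w))]
    simp only [Nat.add_right_inj]
  simp_rw [key]
  rw [Finset.sum_ite_eq]
  by_cases hi : i ∈ Finset.range (w.totalDegree + 1)
  · rw [if_pos hi]
  · rw [if_neg hi, homogeneousComponent_eq_zero, mul_zero]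
    rw [Finset.mem_range, not_lt] at hi
    omega

lemma primeX0 {k : Type*} [Field k] : Prime (X 0 : MvPolynomial (Fin 2) k) := by
  rw [← MulEquiv.prime_iff (finSuccEquiv k 1).toRingEquiv.toMulEquiv]
  show Prime ((finSuccEquiv k 1) (X 0 : MvPolynomial (Fin 2) k))
  rw [finSuccEquiv_X_zero]; exact Polynomial.prime_X

lemma relprimeX {k : Type*} [Field k] : IsRelPrime (X 0 : MvPolynomial (Fin 2) k) (X 1) := by
  intro q hq0 hq1
  obtain ⟨s, hs⟩ := hq0
  rcases (primeX0.irreducible.isUnit_or_isUnit hs) with h | h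
  · exact h
  · exfalso
    obtain ⟨u, rfl⟩ := h
    have hdvd : (X 0 : MvPolynomial (Fin 2) k) ∣ X 1 := by
      refine dvd_trans ⟨(u⁻¹ : (MvPolynomial (Fin 2) k)ˣ), ?_⟩ hq1
      rw [hs]; rw [mul_assoc]; simp
    obtain ⟨t, ht⟩ := hdvd
    have := congrArg (eval (fun i : Fin 2 => if i = 0 then (0:k) else 1)) ht
    simp at this

lemma dvd_of_dvd_mul_relprime {α : Type*} [CommMonoidWithZero α]
    [UniqueFactorizationMonoid α]
    {p a b c : α} (hrel : IsRelPrime b c) (h1 : p ∣ a * b) (h2 : p ∣ a * c) : p ∣ a := by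
  letI := UniqueFactorizationMonoid.toGCDMonoid α
  have hg : p ∣ gcd (a*b) (a*c) := dvd_gcd h1 h2
  have hass := gcd_mul_left' a b c
  have hu : IsUnit (gcd b c) := hrel (gcd_dvd_left b c) (gcd_dvd_right b c)
  have hpa : p ∣ a * gcd b c := hg.trans hass.dvd
  obtain ⟨u, hu⟩ := hu
  rw [← hu] at hpa
  exact (Units.dvd_mul_right).mp hpa

/-- Let `R = k[x,y]`, `f` a nonzero form of degree `d ≥ 1`, `g` a form
of degree `e`, `n ∈ ℕ`, and `I ⊆ f^n·R` a homogeneous ideal.  Assume that for all large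
`j`: (i) `g·R_{j-e} ⊆ f^n·R_{j-nd}`; (ii) `g·f·R_{j-e-d} ⊆ I_j`; and (iii) multiplication
by `g` induces a bijection `R_{j-e}/(f·R_{j-e-d}) → (f^n·R_{j-nd})/I_j` (expressed
elementwise by injectivity and surjectivity).  Then `I_j = f^(n+1)·R_{j-(n+1)d}` for all
sufficiently large `j`. -/
theorem stmt_10 {k : Type*} [Field k]
    (f g : MvPolynomial (Fin 2) k) (d e n : ℕ) (hd : 1 ≤ d)
    (hf0 : f ≠ 0) (hf : f ∈ homogeneousSubmodule (Fin 2) k d)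
    (hg : g ∈ homogeneousSubmodule (Fin 2) k e)
    (I : Ideal (MvPolynomial (Fin 2) k))
    (hIhom : ∀ p ∈ I, ∀ m : ℕ, homogeneousComponent m p ∈ I)
    (hIf : I ≤ Ideal.span {f ^ n})
    (N : ℕ)
    (hi : ∀ j : ℕ, N ≤ j →
      Submodule.map (LinearMap.mulLeft k g) (homDegZ k (Fin 2) ((j : ℤ) - e)) ≤
        Submodule.map (LinearMap.mulLeft k (f ^ n))
          (homDegZ k (Fin 2) ((j : ℤ) - n * d)))
    (hii : ∀ j : ℕ, N ≤ j →
      Submodule.map (LinearMap.mulLeft k (g * f))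
          (homDegZ k (Fin 2) ((j : ℤ) - e - d)) ≤
        Submodule.restrictScalars k I)
    (hinj : ∀ j : ℕ, N ≤ j → ∀ a ∈ homDegZ k (Fin 2) ((j : ℤ) - e),
      g * a ∈ I →
        a ∈ Submodule.map (LinearMap.mulLeft k f) (homDegZ k (Fin 2) ((j : ℤ) - e - d)))
    (hsurj : ∀ j : ℕ, N ≤ j →
      ∀ b ∈ Submodule.map (LinearMap.mulLeft k (f ^ n))
          (homDegZ k (Fin 2) ((j : ℤ) - n * d)),
        ∃ a ∈ homDegZ k (Fin 2) ((j : ℤ) - e), b - g * a ∈ I) :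
    ∃ N' : ℕ, ∀ j : ℕ, N' ≤ j →
      Submodule.restrictScalars k I ⊓ homogeneousSubmodule (Fin 2) k j =
        Submodule.map (LinearMap.mulLeft k (f ^ (n + 1)))
          (homDegZ k (Fin 2) ((j : ℤ) - (n + 1) * d)) := by
  classical
  have hfd : f.IsHomogeneous d := (mem_homogeneousSubmodule _ _).mp hf
  have hfnd : (f ^ n).IsHomogeneous (n * d) := by
    simpa [mul_comm] using hfd.pow n
  -- Step 1 : f ^ n divides g
  have hfng : f ^ n ∣ g := by
    have key : ∀ i : Fin 2, f ^ n ∣ g * X i ^ (N + n * d) := by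
      intro i
      set j := N + e + n * d with hjdef
      have hXmem : (X i ^ (N + n * d) : MvPolynomial (Fin 2) k) ∈
          homDegZ k (Fin 2) ((j : ℤ) - e) := by
        rw [homDegZ_eq _ (N + n * d) (by push_cast; omega)]
        exact isHomogeneous_X_pow i (N + n * d)
      have hmem := hi j (by omega) (Submodule.mem_map_of_mem hXmem)
      rw [Submodule.mem_map] at hmem
      obtain ⟨t, -, ht⟩ := hmem
      simp only [LinearMap.mulLeft_apply] at ht
      exact ⟨t, ht.symm⟩
    exact dvd_of_dvd_mul_relprime (relprimeX.pow) (key 0) (key 1)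
  obtain ⟨h, hgh⟩ := hfng
  refine ⟨N + e + n * d + 2 * d + 1, fun j hj => le_antisymm ?_ ?_⟩
  · -- I_j ⊆ f^(n+1) · R_{j-(n+1)d}
    intro b hb
    rw [Submodule.mem_inf] at hb
    obtain ⟨hbI, hbH⟩ := hb
    rw [Submodule.restrictScalars_mem] at hbI
    obtain ⟨w, hw⟩ := Ideal.mem_span_singleton.mp (hIf hbI)
    set u := homogeneousComponent (j - n * d) w with hudef
    have hbu : b = f ^ n * u := by
      have h1 : homogeneousComponent j b = b := by
        rw [homogeneousComponent_of_mem hbH, if_pos rfl]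
      have h2 : homogeneousComponent (n * d + (j - n * d)) (f ^ n * w)
          = f ^ n * homogeneousComponent (j - n * d) w :=
        hc_mul_homog _ _ _ _ hfnd
      have hj2 : n * d + (j - n * d) = j := by omega
      rw [hj2] at h2
      rw [← h1, hw, h2]
    have humem : u ∈ homDegZ k (Fin 2) (((j - n * d + e : ℕ) : ℤ) - e) := by
      rw [homDegZ_eq _ (j - n * d) (by push_cast; omega)]
      exact homogeneousComponent_mem _ _
    have hgu : g * u ∈ I := by
      rw [hgh]
      have hrw : f ^ n * h * u = h * b := by rw [hbu]; ring
      rw [hrw]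
      exact Ideal.mul_mem_left _ _ hbI
    have hres := hinj (j - n * d + e) (by omega) u humem hgu
    rw [Submodule.mem_map] at hres
    obtain ⟨s, hs1, hs2⟩ := hres
    rw [LinearMap.mulLeft_apply] at hs2
    rw [homDegZ_eq _ (j - n * d - d) (by push_cast; omega)] at hs1
    rw [Submodule.mem_map]
    refine ⟨s, ?_, ?_⟩
    · rw [homDegZ_eq _ (j - n * d - d) (by push_cast [Nat.sub_sub]; ring_nf; omega)]
      exact hs1
    · rw [LinearMap.mulLeft_apply, hbu, ← hs2]; ring
  · -- f^(n+1) · R_{j-(n+1)d} ⊆ I_j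
    intro b hb
    rw [Submodule.mem_map] at hb
    obtain ⟨c, hc1, hc2⟩ := hb
    rw [LinearMap.mulLeft_apply] at hc2
    rw [homDegZ_eq _ (j - (n * d + d)) (by push_cast [Nat.sub_sub]; ring_nf; omega)] at hc1
    rw [Submodule.mem_inf]
    constructor
    · -- b ∈ I
      rw [Submodule.restrictScalars_mem, ← hc2]
      have hcmem : c ∈ homDegZ k (Fin 2) (((j - d : ℕ) : ℤ) - n * d) := by
        rw [homDegZ_eq _ (j - (n * d + d)) (by push_cast [Nat.sub_sub]; ring_nf; omega)]
        exact hc1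
      obtain ⟨a, ha, hIa⟩ := hsurj (j - d) (by omega)
        (f ^ n * c) (by
          rw [Submodule.mem_map]
          exact ⟨c, hcmem, by rw [LinearMap.mulLeft_apply]⟩)
      have hfI : f * (f ^ n * c - g * a) ∈ I := Ideal.mul_mem_left _ _ hIa
      have hgfa : g * f * a ∈ I := by
        have hamem : a ∈ homDegZ k (Fin 2) ((j : ℤ) - e - d) := by
          rw [homDegZ_eq _ (j - d - e) (by push_cast; omega)] at ha ⊢
          · exact ha
        have := hii j (by omega) (Submodule.mem_map_of_mem hamem)
        rw [Submodule.restrictScalars_mem, LinearMap.mulLeft_apply] at this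
        exact this
      have hsum : f ^ (n + 1) * c = f * (f ^ n * c - g * a) + g * f * a := by ring
      rw [hsum]
      exact Ideal.add_mem _ hfI hgfa
    · -- b homogeneous of degree j
      rw [← hc2, mem_homogeneousSubmodule]
      have hpow : (f ^ (n + 1)).IsHomogeneous ((n + 1) * d) := by
        simpa [mul_comm] using hfd.pow (n + 1)
      have := hpow.mul ((mem_homogeneousSubmodule _ _).mp hc1)
      have hdeg : (n + 1) * d + (j - (n * d + d)) = j := by
        have : (n + 1) * d = n * d + d := by ring
        omega
      rwa [hdeg] at this
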